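/- Let κ ≥ 1 and let A₁, …, A_κ ∈ Mat₂(ℝ) with det A_j = 1 and A_j ≠ I, A_j ≠ −I for each j. Let N₊ := { E ∈ Mat₂(ℝ) : E ≠ 0, E² = 0, e₁₂ ≤ 0 ≤ e₂₁ }, equipped with the subspace topology from Mat₂(ℝ). Then the set N₊(A) := { (E₁, …, E_κ) ∈ N₊^κ : E_i · A_j · E_j ≠ 0 for all i, j ∈ {1, …, κ} } is open and dense in N₊^κ. -/

import Mathlib

open Matrix Topology Filter Polynomial

noncomputable section

/-- The set `N₊` of nonzero nilpotent `2 × 2` real matrices with `e₁₂ ≤ 0 ≤ e₂₁`. -/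
def Nplus : Set (Matrix (Fin 2) (Fin 2) ℝ) :=
  {E | E ≠ 0 ∧ E * E = 0 ∧ E 0 1 ≤ 0 ∧ 0 ≤ E 1 0}

namespace Stmt16Aux

lemma zero_fin_two : (0 : Matrix (Fin 2) (Fin 2) ℝ) = !![0,0;0,0] := by
  ext i j; fin_cases i <;> fin_cases j <;> rfl

lemma neg_one_fin_two : (-1 : Matrix (Fin 2) (Fin 2) ℝ) = !![-1,0;0,-1] := by
  ext i j; fin_cases i <;> fin_cases j <;> simp [Matrix.one_apply]

/-- rank-one nilpotent matrix attached to a vector `v`. -/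
def Mv (v : ℝ × ℝ) : Matrix (Fin 2) (Fin 2) ℝ :=
  !![v.1 * v.2, -v.1 ^ 2; v.2 ^ 2, -(v.1 * v.2)]

/-- quadratic form whose nonvanishing encodes `Mv v * A * Mv v ≠ 0`. -/
def Q (A : Matrix (Fin 2) (Fin 2) ℝ) (v : ℝ × ℝ) : ℝ :=
  v.2 * (A 0 0 * v.1 + A 0 1 * v.2) - v.1 * (A 1 0 * v.1 + A 1 1 * v.2)

lemma eq_Mv_iff (E : Matrix (Fin 2) (Fin 2) ℝ) (v : ℝ × ℝ) :
    E = Mv v ↔ E 0 0 = v.1 * v.2 ∧ E 0 1 = -v.1 ^ 2 ∧ E 1 0 = v.2 ^ 2 ∧ E 1 1 = -(v.1 * v.2) := by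
  constructor
  · intro h; subst h; refine ⟨?_, ?_, ?_, ?_⟩ <;> simp [Mv]
  · rintro ⟨h1, h2, h3, h4⟩
    rw [Matrix.eta_fin_two E, h1, h2, h3, h4]; rfl

lemma Mv_mem {v : ℝ × ℝ} (hv : v ≠ 0) : Mv v ∈ Nplus := by
  refine ⟨?_, ?_, ?_, ?_⟩
  · intro h
    apply hv
    have h01 : (-v.1 ^ 2 : ℝ) = 0 := by
      have := congrFun (congrFun h 0) 1; simpa [Mv] using this
    have h10 : (v.2 ^ 2 : ℝ) = 0 := by
      have := congrFun (congrFun h 1) 0; simpa [Mv] using this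
    have h1 : v.1 = 0 := by nlinarith [sq_nonneg v.1]
    have h2 : v.2 = 0 := by nlinarith [sq_nonneg v.2]
    exact Prod.ext h1 h2
  · ext i j
    fin_cases i <;> fin_cases j <;>
      simp [Mv, Matrix.mul_apply, Fin.sum_univ_two] <;> ring
  · simp [Mv]; positivity
  · simp [Mv]; positivity

lemma continuous_Mv : Continuous Mv := by
  apply continuous_matrix
  intro i j
  fin_cases i <;> fin_cases j <;> simp [Mv] <;> fun_prop

lemma exists_Mv {E : Matrix (Fin 2) (Fin 2) ℝ} (hE : E ∈ Nplus) :
    ∃ v : ℝ × ℝ, v ≠ 0 ∧ E = Mv v := by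
  obtain ⟨hne, hsq, hb, hc⟩ := hE
  have h00 : E 0 0 * E 0 0 + E 0 1 * E 1 0 = 0 := by
    have := congrFun (congrFun hsq 0) 0
    simpa [Matrix.mul_apply, Fin.sum_univ_two] using this
  have h01 : E 0 0 * E 0 1 + E 0 1 * E 1 1 = 0 := by
    have := congrFun (congrFun hsq 0) 1
    simpa [Matrix.mul_apply, Fin.sum_univ_two] using this
  have h10 : E 1 0 * E 0 0 + E 1 1 * E 1 0 = 0 := by
    have := congrFun (congrFun hsq 1) 0
    simpa [Matrix.mul_apply, Fin.sum_univ_two] using this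
  have h11 : E 1 0 * E 0 1 + E 1 1 * E 1 1 = 0 := by
    have := congrFun (congrFun hsq 1) 1
    simpa [Matrix.mul_apply, Fin.sum_univ_two] using this
  have hd : E 1 1 = -(E 0 0) := by
    by_cases had : E 0 0 + E 1 1 = 0
    · linarith
    · exfalso
      have hb0 : E 0 1 = 0 := by
        have : E 0 1 * (E 0 0 + E 1 1) = 0 := by linear_combination h01
        rcases mul_eq_zero.1 this with h | h
        · exact h
        · exact absurd h had
      have hc0 : E 1 0 = 0 := by
        have : E 1 0 * (E 0 0 + E 1 1) = 0 := by linear_combination h10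
        rcases mul_eq_zero.1 this with h | h
        · exact h
        · exact absurd h had
      have ha0 : E 0 0 = 0 := mul_self_eq_zero.1 (by rw [hb0] at h00; linarith)
      have hd0 : E 1 1 = 0 := mul_self_eq_zero.1 (by rw [hb0] at h11; linarith)
      exact had (by rw [ha0, hd0]; ring)
  by_cases hb0 : E 0 1 = 0
  · have ha0 : E 0 0 = 0 := mul_self_eq_zero.1 (by rw [hb0] at h00; linarith)
    have hcpos : 0 < E 1 0 := by
      rcases lt_or_eq_of_le hc with h | h
      · exact h
      · exfalso
        apply hne
        rw [Matrix.eta_fin_two E, ha0, hb0, ← h, hd, ha0, zero_fin_two]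
        norm_num
    refine ⟨(0, Real.sqrt (E 1 0)), ?_, ?_⟩
    · intro h
      have h2 : Real.sqrt (E 1 0) = 0 := congrArg Prod.snd h
      rw [Real.sqrt_eq_zero hc] at h2
      exact absurd h2 (ne_of_gt hcpos)
    · rw [eq_Mv_iff]
      refine ⟨?_, ?_, ?_, ?_⟩ <;>
        simp [ha0, hb0, hd, Real.sq_sqrt hc]
  · have hblt : E 0 1 < 0 := lt_of_le_of_ne hb hb0
    have hnbpos : (0:ℝ) < -(E 0 1) := by linarith
    have hxpos : 0 < Real.sqrt (-(E 0 1)) := Real.sqrt_pos.2 hnbpos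
    have hx2 : Real.sqrt (-(E 0 1)) ^ 2 = -(E 0 1) := Real.sq_sqrt (le_of_lt hnbpos)
    have hxne : Real.sqrt (-(E 0 1)) ≠ 0 := ne_of_gt hxpos
    refine ⟨(Real.sqrt (-(E 0 1)), E 0 0 / Real.sqrt (-(E 0 1))), ?_, ?_⟩
    · intro h
      exact hxne (congrArg Prod.fst h)
    · rw [eq_Mv_iff]
      refine ⟨?_, ?_, ?_, ?_⟩
      · simp [mul_div_cancel₀ _ hxne]
      · simp [hx2]
      · simp only [div_pow, hx2]
        rw [eq_div_iff (by linarith : -(E 0 1) ≠ 0)]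
        nlinarith [h00]
      · simp [mul_div_cancel₀ _ hxne, hd]

lemma mul_entry0 (v : ℝ × ℝ) (B : Matrix (Fin 2) (Fin 2) ℝ) (l : Fin 2) :
    (Mv v * B) 0 l = v.1 * (v.2 * B 0 l - v.1 * B 1 l) := by
  simp [Mv, Matrix.mul_apply, Fin.sum_univ_two]; ring

lemma mul_entry1 (v : ℝ × ℝ) (B : Matrix (Fin 2) (Fin 2) ℝ) (l : Fin 2) :
    (Mv v * B) 1 l = v.2 * (v.2 * B 0 l - v.1 * B 1 l) := by
  simp [Mv, Matrix.mul_apply, Fin.sum_univ_two]; ring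

lemma sandwich (v : ℝ × ℝ) (A : Matrix (Fin 2) (Fin 2) ℝ) :
    Mv v * A * Mv v = Q A v • Mv v := by
  ext i j
  fin_cases i <;> fin_cases j <;>
    simp [Mv, Q, Matrix.mul_apply, Matrix.vecMul, dotProduct,
      Fin.sum_univ_two, Matrix.smul_apply, smul_eq_mul] <;> ring

lemma exists_col {B : Matrix (Fin 2) (Fin 2) ℝ} (hB : B ≠ 0) :
    ∃ (l : Fin 2) (u : ℝ × ℝ), u.2 * B 0 l - u.1 * B 1 l ≠ 0 := by
  by_contra h
  push_neg at h
  apply hB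
  have h0 : ∀ l, B 0 l = 0 := by
    intro l; have := h l (0, 1); simpa using this
  have h1 : ∀ l, B 1 l = 0 := by
    intro l; have := h l (1, 0); simpa using this
  rw [Matrix.eta_fin_two B, h0, h0, h1, h1, zero_fin_two]

lemma exists_Q_ne {A : Matrix (Fin 2) (Fin 2) ℝ} (hdet : A.det = 1)
    (h1 : A ≠ 1) (h2 : A ≠ -1) : ∃ u : ℝ × ℝ, Q A u ≠ 0 := by
  by_contra h
  push_neg at h
  have e01 : A 0 1 = 0 := by have := h (0, 1); simpa [Q] using this
  have e10 : A 1 0 = 0 := by have := h (1, 0); simpa [Q] using this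
  have e00 : A 0 0 = A 1 1 := by
    have := h (1, 1); simp [Q, e01, e10] at this; linarith
  have hdet2 : A 0 0 * A 1 1 - A 0 1 * A 1 0 = 1 := by
    rw [← Matrix.det_fin_two]; exact hdet
  have hpm : A 0 0 = 1 ∨ A 0 0 = -1 := by
    have hsq : (A 0 0 - 1) * (A 0 0 + 1) = 0 := by
      linear_combination hdet2 + A 0 0 * e00 + A 1 0 * e01
    rcases mul_eq_zero.1 hsq with h' | h'
    · left; linarith
    · right; linarith
  rcases hpm with h' | h'
  · exact h1 (by rw [Matrix.eta_fin_two A, e01, e10, ← e00, h', Matrix.one_fin_two])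
  · exact h2 (by rw [Matrix.eta_fin_two A, e01, e10, ← e00, h', neg_one_fin_two])

lemma dense_good (c₀ c₁ c₂ : ℝ) (h : c₁ ≠ 0 ∨ c₂ ≠ 0) (v u : ℝ × ℝ) (hv : v ≠ 0) :
    Dense {t : ℝ | (c₀ + c₁ * t + c₂ * t ^ 2 ≠ 0) ∧
      ((v.1 + t * u.1, v.2 + t * u.2) : ℝ × ℝ) ≠ 0} := by
  have hfin1 : {t : ℝ | c₀ + c₁ * t + c₂ * t ^ 2 = 0}.Finite := by
    have hp : (C c₀ + C c₁ * X + C c₂ * X ^ 2 : ℝ[X]) ≠ 0 := by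
      intro h0
      rcases h with h | h
      · have h1 := congrArg (fun p : ℝ[X] => p.coeff 1) h0
        simp [coeff_add, coeff_C_mul, coeff_X, coeff_X_pow, coeff_C] at h1
        exact h h1
      · have h1 := congrArg (fun p : ℝ[X] => p.coeff 2) h0
        simp [coeff_add, coeff_C_mul, coeff_X, coeff_X_pow, coeff_C] at h1
        exact h h1
    refine Set.Finite.subset (Polynomial.finite_setOf_isRoot hp) ?_
    intro t ht
    simp only [Set.mem_setOf_eq] at ht
    simp only [Set.mem_setOf_eq, IsRoot.def, eval_add, eval_mul, eval_C, eval_X, eval_pow]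
    linarith
  have hfin2 : {t : ℝ | ((v.1 + t * u.1, v.2 + t * u.2) : ℝ × ℝ) = 0}.Finite := by
    apply Set.Subsingleton.finite
    intro s hs t ht
    simp only [Set.mem_setOf_eq, Prod.ext_iff, Prod.fst_zero, Prod.snd_zero] at hs ht
    by_contra hst
    have hu1 : u.1 = 0 := by
      have hz : (s - t) * u.1 = 0 := by linarith [hs.1, ht.1]
      rcases mul_eq_zero.1 hz with h' | h'
      · exact absurd (by linarith : s = t) hst
      · exact h'
    have hu2 : u.2 = 0 := by
      have hz : (s - t) * u.2 = 0 := by linarith [hs.2, ht.2]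
      rcases mul_eq_zero.1 hz with h' | h'
      · exact absurd (by linarith : s = t) hst
      · exact h'
    apply hv
    have hv1 : v.1 = 0 := by have := hs.1; rw [hu1] at this; linarith
    have hv2 : v.2 = 0 := by have := hs.2; rw [hu2] at this; linarith
    exact Prod.ext hv1 hv2
  have hd := (Set.Finite.countable (hfin1.union hfin2)).dense_compl ℝ
  refine hd.mono ?_
  intro t ht
  simp only [Set.compl_union, Set.mem_inter_iff, Set.mem_compl_iff, Set.mem_setOf_eq] at ht
  exact ⟨ht.1, ht.2⟩

abbrev SubN (κ : ℕ) := {E : Fin κ → Matrix (Fin 2) (Fin 2) ℝ // ∀ i, E i ∈ Nplus}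

lemma mem_closure_of_good {κ : ℕ} (E : Fin κ → Matrix (Fin 2) (Fin 2) ℝ)
    (hE : ∀ k, E k ∈ Nplus) (r : Fin κ) (v u : ℝ × ℝ) (hEr : E r = Mv v)
    (D : Set ℝ) (hD : Dense D)
    (hDne : ∀ t ∈ D, ((v.1 + t * u.1, v.2 + t * u.2) : ℝ × ℝ) ≠ 0)
    (S : Set (SubN κ))
    (hS : ∀ t ∈ D, ∀ h, (⟨Function.update E r (Mv (v.1 + t * u.1, v.2 + t * u.2)), h⟩ : SubN κ) ∈ S) :
    (⟨E, hE⟩ : SubN κ) ∈ closure S := by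
  obtain ⟨f, hfD, hf⟩ := mem_closure_iff_seq_limit.mp (hD 0)
  have hmem : ∀ n k, Function.update E r (Mv (v.1 + f n * u.1, v.2 + f n * u.2)) k ∈ Nplus := by
    intro n k
    rcases eq_or_ne k r with rfl | hk
    · rw [Function.update_self]; exact Mv_mem (hDne _ (hfD n))
    · rw [Function.update_of_ne hk]; exact hE k
  refine mem_closure_of_tendsto (b := (Filter.atTop : Filter ℕ))
    (f := fun n => (⟨_, hmem n⟩ : SubN κ)) ?_
    (Filter.Eventually.of_forall fun n => hS _ (hfD n) _)
  rw [tendsto_subtype_rng, tendsto_pi_nhds]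
  intro k
  rcases eq_or_ne k r with rfl | hk
  · simp only [Function.update_self]
    have h1 : Filter.Tendsto (fun n => ((v.1 + f n * u.1, v.2 + f n * u.2) : ℝ × ℝ))
        Filter.atTop (𝓝 v) := by
      have ha : Filter.Tendsto (fun n => v.1 + f n * u.1) Filter.atTop (𝓝 v.1) := by
        have := tendsto_const_nhds (x := v.1) (f := Filter.atTop (α := ℕ)) |>.add
          (hf.mul (tendsto_const_nhds (x := u.1)))
        simpa using this
      have hb : Filter.Tendsto (fun n => v.2 + f n * u.2) Filter.atTop (𝓝 v.2) := by
        have := tendsto_const_nhds (x := v.2) (f := Filter.atTop (α := ℕ)) |>.add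
          (hf.mul (tendsto_const_nhds (x := u.2)))
        simpa using this
      exact ha.prodMk_nhds hb
    rw [hEr]
    exact (continuous_Mv.tendsto v).comp h1
  · simp only [Function.update_of_ne hk]
    exact tendsto_const_nhds

lemma dense_iInter_finite {X ι : Type*} [TopologicalSpace X] [Fintype ι] {U : ι → Set X}
    (ho : ∀ i, IsOpen (U i)) (hd : ∀ i, Dense (U i)) : Dense (⋂ i, U i) := by
  classical
  have key : ∀ s : Finset ι, Dense (⋂ i ∈ s, U i) := by
    intro s
    induction s using Finset.induction_on with
    | empty => simp
    | insert _ _ h ih =>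
        rw [Finset.set_biInter_insert]
        exact (hd _).inter_of_isOpen_left ih (ho _)
  have := key Finset.univ
  simpa using this

end Stmt16Aux

open Stmt16Aux

/-- Given `A₁, …, A_κ ∈ SL₂(ℝ) \ {±I}`, the set
`N₊(A) = {(E₁, …, E_κ) ∈ N₊^κ : Eᵢ Aⱼ Eⱼ ≠ 0 ∀ i, j}` is open and dense in `N₊^κ`
(with the subspace topology). -/
theorem stmt_16 (κ : ℕ) (hκ : 1 ≤ κ) (A : Fin κ → Matrix (Fin 2) (Fin 2) ℝ)
    (hdet : ∀ j, (A j).det = 1) (hA : ∀ j, A j ≠ 1 ∧ A j ≠ -1) :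
    IsOpen {E : {E : Fin κ → Matrix (Fin 2) (Fin 2) ℝ // ∀ i, E i ∈ Nplus} |
        ∀ i j, E.1 i * A j * E.1 j ≠ 0} ∧
    Dense {E : {E : Fin κ → Matrix (Fin 2) (Fin 2) ℝ // ∀ i, E i ∈ Nplus} |
        ∀ i j, E.1 i * A j * E.1 j ≠ 0} := by
  classical
  set U : Fin κ × Fin κ → Set (SubN κ) :=
    fun p => {x : SubN κ | x.1 p.1 * A p.2 * x.1 p.2 ≠ 0} with hU
  have hset : {E : SubN κ | ∀ i j, E.1 i * A j * E.1 j ≠ 0} = ⋂ p, U p := by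
    ext x
    simp only [Set.mem_setOf_eq, Set.mem_iInter, hU, Prod.forall]
  have hUo : ∀ p, IsOpen (U p) := by
    rintro ⟨i, j⟩
    have hc : Continuous fun x : SubN κ => x.1 i * A j * x.1 j := by
      refine Continuous.matrix_mul (Continuous.matrix_mul ?_ continuous_const) ?_
      · exact (continuous_apply i).comp continuous_subtype_val
      · exact (continuous_apply j).comp continuous_subtype_val
    exact isOpen_compl_singleton.preimage hc
  have hUd : ∀ p, Dense (U p) := by
    rintro ⟨i, j⟩
    intro x
    obtain ⟨E, hE⟩ := x
    rcases eq_or_ne i j with rfl | hij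
    · -- diagonal case
      obtain ⟨v, hv, hEv⟩ := exists_Mv (hE i)
      obtain ⟨u, hu⟩ := exists_Q_ne (hdet i) (hA i).1 (hA i).2
      set c₁ : ℝ := v.2 * (A i 0 0 * u.1 + A i 0 1 * u.2) - v.1 * (A i 1 0 * u.1 + A i 1 1 * u.2)
        + u.2 * (A i 0 0 * v.1 + A i 0 1 * v.2) - u.1 * (A i 1 0 * v.1 + A i 1 1 * v.2) with hc₁
    
      have hexp : ∀ t : ℝ, Q (A i) (v.1 + t * u.1, v.2 + t * u.2)
          = Q (A i) v + c₁ * t + Q (A i) u * t ^ 2 := by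
        intro t; simp only [Q, hc₁]; ring
      refine mem_closure_of_good E hE i v u hEv _
        (dense_good (Q (A i) v) c₁ (Q (A i) u) (Or.inr hu) v u hv)
        (fun t ht => ht.2) _ ?_
      intro t ht h
      simp only [hU, Set.mem_setOf_eq, Function.update_self]
      rw [sandwich]
      intro h0
      rcases smul_eq_zero.1 h0 with hq | hm
      · exact (hexp t ▸ ht.1) hq
      · exact (Mv_mem ht.2).1 hm
    · -- off-diagonal case
      have hBne : A j * E j ≠ 0 := by
        intro h0
        have hinv := Matrix.nonsing_inv_mul (A j) (by rw [hdet j]; exact isUnit_one)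
        apply (hE j).1
        calc E j = ((A j)⁻¹ * A j) * E j := by rw [hinv, one_mul]
          _ = (A j)⁻¹ * (A j * E j) := by rw [mul_assoc]
          _ = 0 := by rw [h0, mul_zero]
      obtain ⟨l, u, hu⟩ := exists_col hBne
      obtain ⟨v, hv, hEv⟩ := exists_Mv (hE i)
      set B := A j * E j with hB
      have hexp : ∀ t : ℝ, (v.2 + t * u.2) * B 0 l - (v.1 + t * u.1) * B 1 l
          = (v.2 * B 0 l - v.1 * B 1 l) + (u.2 * B 0 l - u.1 * B 1 l) * t + 0 * t ^ 2 := by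
        intro t; ring
      refine mem_closure_of_good E hE i v u hEv _
        (dense_good (v.2 * B 0 l - v.1 * B 1 l) (u.2 * B 0 l - u.1 * B 1 l) 0
          (Or.inl hu) v u hv)
        (fun t ht => ht.2) _ ?_
      intro t ht h
      simp only [hU, Set.mem_setOf_eq, Function.update_self, Function.update_of_ne hij.symm]
      rw [mul_assoc, ← hB]
      intro h0
      have e0 : (Mv (v.1 + t * u.1, v.2 + t * u.2) * B) 0 l = 0 := by rw [h0]; simp
      have e1 : (Mv (v.1 + t * u.1, v.2 + t * u.2) * B) 1 l = 0 := by rw [h0]; simp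
      rw [mul_entry0] at e0
      rw [mul_entry1] at e1
      have hll : (v.2 + t * u.2) * B 0 l - (v.1 + t * u.1) * B 1 l ≠ 0 := by
        rw [hexp t]; exact ht.1
      apply ht.2
      have hw1 : v.1 + t * u.1 = 0 := by
        rcases mul_eq_zero.1 e0 with h' | h'
        · exact h'
        · exact absurd h' hll
      have hw2 : v.2 + t * u.2 = 0 := by
        rcases mul_eq_zero.1 e1 with h' | h'
        · exact h'
        · exact absurd h' hll
      simp [Prod.ext_iff, hw1, hw2]
  constructor
  · rw [hset]
    exact isOpen_iInter_of_finite hUo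
  · rw [hset]
    exact dense_iInter_finite hUo hUd
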